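/- arXiv:1412.0349 — 2 statements merged into one kernel-verified Lean document; each statement's English description precedes it below -/
import Mathlib

section
/- For fixed ρ > 0 and M > 0, the function h(z) = ρ/z − ln z + ln(1 + M/(e^{(z−1)/ρ} − 1)) + M e^{(z−1)/ρ}/((e^{(z−1)/ρ}−1)² + M(e^{(z−1)/ρ}−1)) is strictly decreasing on (1, ∞). -/
open Real

lemma g_hasDerivAt (M u : ℝ) (hM : 0 < M) (hu : 0 < u) :
    HasDerivAt (fun u : ℝ => Real.log (1 + M / u) + M * (u + 1) / (u ^ 2 + M * u))
      ((-(M / u ^ 2)) / (1 + M / u)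
        + (M * (u ^ 2 + M * u) - M * (u + 1) * (2 * u + M)) / (u ^ 2 + M * u) ^ 2) u := by
  have hd : (0:ℝ) < u ^ 2 + M * u := by positivity
  have h1 : HasDerivAt (fun u : ℝ => 1 + M / u) (-(M / u ^ 2)) u := by
    have := ((hasDerivAt_const u M).div (hasDerivAt_id u) hu.ne').const_add 1
    refine this.congr_deriv ?_
    simp [neg_div]
  have hpos : 0 < 1 + M / u := by positivity
  have hlog := h1.log hpos.ne'
  have h2 : HasDerivAt (fun u : ℝ => M * (u + 1)) M u := by
    have := ((hasDerivAt_id u).add_const 1).const_mul M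
    simpa using this
  have h3 : HasDerivAt (fun u : ℝ => u ^ 2 + M * u) (2 * u + M) u := by
    have := (hasDerivAt_pow 2 u).add ((hasDerivAt_id u).const_mul M)
    exact this.congr_deriv (by ring)
  exact hlog.add (h2.div h3 hd.ne')

lemma g_anti (M : ℝ) (hM : 0 < M) :
    StrictAntiOn (fun u : ℝ => Real.log (1 + M / u) + M * (u + 1) / (u ^ 2 + M * u))
      (Set.Ioi 0) := by
  apply strictAntiOn_of_deriv_neg (convex_Ioi 0)
  · intro x hx
    exact (g_hasDerivAt M x hM hx).continuousAt.continuousWithinAt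
  · intro x hx
    rw [interior_Ioi, Set.mem_Ioi] at hx
    rw [(g_hasDerivAt M x hM hx).deriv]
    have hd : (0:ℝ) < x ^ 2 + M * x := by positivity
    have h1 : (-(M / x ^ 2)) / (1 + M / x) < 0 := by
      apply div_neg_of_neg_of_pos
      · have : 0 < M / x ^ 2 := by positivity
        linarith
      · positivity
    have h2 : (M * (x ^ 2 + M * x) - M * (x + 1) * (2 * x + M)) / (x ^ 2 + M * x) ^ 2 < 0 := by
      apply div_neg_of_neg_of_pos
      · nlinarith [mul_pos hM hx, mul_pos (mul_pos hM hx) hx, mul_pos hM hM]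
      · positivity
    linarith

/-- h(z) is strictly decreasing on (1, ∞). -/
theorem h_strictAnti (ρ M : ℝ) (hρ : 0 < ρ) (hM : 0 < M) :
    StrictAntiOn (fun z : ℝ =>
      ρ / z - Real.log z + Real.log (1 + M / (exp ((z - 1) / ρ) - 1)) +
        M * exp ((z - 1) / ρ) /
          ((exp ((z - 1) / ρ) - 1) ^ 2 + M * (exp ((z - 1) / ρ) - 1)))
      (Set.Ioi 1) := by
  intro a ha b hb hab
  simp only [Set.mem_Ioi] at ha hb
  have hrw : ∀ z : ℝ,
      Real.log (1 + M / (exp ((z - 1) / ρ) - 1)) +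
        M * exp ((z - 1) / ρ) /
          ((exp ((z - 1) / ρ) - 1) ^ 2 + M * (exp ((z - 1) / ρ) - 1))
      = (fun u : ℝ => Real.log (1 + M / u) + M * (u + 1) / (u ^ 2 + M * u))
          (exp ((z - 1) / ρ) - 1) := by
    intro z
    simp only
    ring_nf
  have hua : (0:ℝ) < exp ((a - 1) / ρ) - 1 := by
    have h0 : (0:ℝ) < (a - 1) / ρ := by
      apply div_pos <;> linarith
    have : (1:ℝ) < exp ((a - 1) / ρ) := by
      calc (1:ℝ) = exp 0 := Real.exp_zero.symm
      _ < _ := Real.exp_lt_exp.mpr h0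
    linarith
  have hub : (0:ℝ) < exp ((b - 1) / ρ) - 1 := by
    have h0 : (0:ℝ) < (b - 1) / ρ := by
      apply div_pos <;> linarith
    have : (1:ℝ) < exp ((b - 1) / ρ) := by
      calc (1:ℝ) = exp 0 := Real.exp_zero.symm
      _ < _ := Real.exp_lt_exp.mpr h0
    linarith
  have huab : exp ((a - 1) / ρ) - 1 < exp ((b - 1) / ρ) - 1 := by
    have h0 : (a - 1) / ρ < (b - 1) / ρ := by
      apply div_lt_div_of_pos_right ?_ hρ
      linarith
    have := Real.exp_lt_exp.mpr h0
    linarith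
  have hg := g_anti M hM hua hub huab
  have h1 : ρ / b < ρ / a := div_lt_div_of_pos_left hρ (by linarith) hab
  have h2 : Real.log a < Real.log b := Real.log_lt_log (by linarith) hab
  simp only at hg hrw ⊢
  linarith [hrw a, hrw b]
end

section
/- For k₂ > 0 and ρ > 0, the function π(R_s) with ξ(R_s) defined as the positive root of ξ² + A(R_s)ξ − B(R_s) = 0 (A = k₂(2^{R_s}−1)/(1+k₂2^{R_s}), B = ρk₂(1−2^{−R_s})/(1+k₂2^{R_s})) satisfies: the left-hand side of k₂(2^{R_s} + (2^{R_s}−1)/ξ)(R_s ln 2 − 1 + R_s ln 2/ξ) = 1 is monotonically increasing in R_s, hence the equation has at most one root. -/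
open Real Set

private lemma quad_pos {A B : ℝ} (hA : 0 ≤ A) (hB : 0 < B) :
    0 < (1/2) * (-A + Real.sqrt (A^2 + 4*B)) := by
  have h0 : (0:ℝ) ≤ A^2 + 4*B := by nlinarith
  have hs := Real.sq_sqrt h0
  have hn := Real.sqrt_nonneg (A^2 + 4*B)
  nlinarith [hs, hn]

private lemma quad_root {A B : ℝ} (h0 : (0:ℝ) ≤ A^2 + 4*B) :
    ((1/2) * (-A + Real.sqrt (A^2 + 4*B)))^2
      + A * ((1/2) * (-A + Real.sqrt (A^2 + 4*B))) = B := by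
  have hs := Real.sq_sqrt h0
  linear_combination hs / 4

private lemma hasDerivAt_tc (c t : ℝ) : HasDerivAt (fun t : ℝ => t * c) c t := by
  simpa using (hasDerivAt_id t).mul_const c

/-- `t ↦ e^{tc}(tc-1)` is strictly increasing on `[0,∞)`. -/
private lemma S1_mono {c : ℝ} (hc : 0 < c) :
    StrictMonoOn (fun t : ℝ => Real.exp (t*c) * (t*c - 1)) (Ici 0) := by
  apply strictMonoOn_of_deriv_pos (convex_Ici 0)
  · fun_prop
  · intro t ht
    rw [interior_Ici] at ht
    have hd : HasDerivAt (fun t : ℝ => Real.exp (t*c) * (t*c - 1))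
        (c^2 * t * Real.exp (t*c)) t := by
      have h1 := hasDerivAt_tc c t
      have h2 : HasDerivAt (fun t : ℝ => Real.exp (t*c)) (Real.exp (t*c) * c) t := h1.exp
      have h3 : HasDerivAt (fun t : ℝ => t*c - 1) c t := h1.sub_const 1
      exact (h2.mul h3).congr_deriv (by ring)
    rw [hd.deriv]
    have ht' : 0 < t := ht
    positivity

/-- `t ↦ (e^{tc}-1)/(tc)` is strictly increasing on `(0,∞)`. -/
private lemma v_mono {c : ℝ} (hc : 0 < c) :
    StrictMonoOn (fun t : ℝ => (Real.exp (t*c) - 1) / (t*c)) (Ioi 0) := by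
  apply strictMonoOn_of_deriv_pos (convex_Ioi 0)
  · apply ContinuousOn.div
    · fun_prop
    · fun_prop
    · intro t ht
      exact ne_of_gt (mul_pos ht hc)
  · intro t ht
    rw [interior_Ioi] at ht
    have htc : 0 < t*c := mul_pos ht hc
    have h1 := hasDerivAt_tc c t
    have h2 : HasDerivAt (fun t : ℝ => Real.exp (t*c) - 1) (Real.exp (t*c) * c) t :=
      h1.exp.sub_const 1
    have hD := h2.div h1 (ne_of_gt htc)
    rw [(show HasDerivAt (fun t : ℝ => (Real.exp (t*c) - 1) / (t*c)) _ t from hD).deriv]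
    apply div_pos _ (by positivity)
    have hpos : 0 < Real.exp (t*c) := Real.exp_pos _
    have hlt : (1 - t*c) * Real.exp (t*c) < 1 := by
      have h := Real.add_one_lt_exp (x := -(t*c)) (by nlinarith)
      have he : Real.exp (-(t*c)) * Real.exp (t*c) = 1 := by
        rw [← Real.exp_add]; simp
      nlinarith
    nlinarith

/-- `t ↦ 2e^{tc} - 1 - (e^{tc}-1)/(tc)` is strictly increasing on `(0,∞)`. -/
private lemma w_mono {c : ℝ} (hc : 0 < c) :
    StrictMonoOn (fun t : ℝ => 2*Real.exp (t*c) - 1 - (Real.exp (t*c) - 1) / (t*c)) (Ioi 0) := by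
  apply strictMonoOn_of_deriv_pos (convex_Ioi 0)
  · apply ContinuousOn.sub
    · fun_prop
    · apply ContinuousOn.div
      · fun_prop
      · fun_prop
      · intro t ht
        exact ne_of_gt (mul_pos ht hc)
  · intro t ht
    rw [interior_Ioi] at ht
    have htc : 0 < t*c := mul_pos ht hc
    have h1 := hasDerivAt_tc c t
    have h2 : HasDerivAt (fun t : ℝ => Real.exp (t*c) - 1) (Real.exp (t*c) * c) t :=
      h1.exp.sub_const 1
    have h3 : HasDerivAt (fun t : ℝ => 2*Real.exp (t*c) - 1)
        (2 * (Real.exp (t*c) * c)) t := ((h1.exp.const_mul 2).sub_const 1)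
    have hD := h3.sub (h2.div h1 (ne_of_gt htc))
    rw [(show HasDerivAt (fun t : ℝ => 2*Real.exp (t*c) - 1 - (Real.exp (t*c) - 1) / (t*c)) _ t from hD).deriv]
    have hpos : 0 < Real.exp (t*c) := Real.exp_pos _
    have hge : t*c + 1 ≤ Real.exp (t*c) := Real.add_one_le_exp _
    have hquad : (0:ℝ) ≤ (t*c)^2 - (t*c) + 1 := by nlinarith [sq_nonneg (t*c - 1)]
    have hkey : 1 ≤ Real.exp (t*c) * ((t*c)^2 - (t*c) + 1) := by
      nlinarith [mul_nonneg (sub_nonneg.mpr hge) hquad]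
    rw [sub_pos]
    rw [div_lt_iff₀ (by positivity)]
    nlinarith [mul_pos htc htc, mul_pos hpos (mul_pos htc htc)]

/-- `t ↦ (1 - e^{-tc})/(tc)^2` is strictly decreasing on `(0,∞)`. -/
private lemma h1_anti {c : ℝ} (hc : 0 < c) :
    StrictAntiOn (fun t : ℝ => (1 - Real.exp (-(t*c))) / (t*c)^2) (Ioi 0) := by
  apply strictAntiOn_of_deriv_neg (convex_Ioi 0)
  · apply ContinuousOn.div
    · fun_prop
    · fun_prop
    · intro t ht
      exact ne_of_gt (pow_pos (mul_pos ht hc) 2)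
  · intro t ht
    rw [interior_Ioi] at ht
    have htc : 0 < t*c := mul_pos ht hc
    have h1 := hasDerivAt_tc c t
    have hn : HasDerivAt (fun t : ℝ => 1 - Real.exp (-(t*c)))
        (Real.exp (-(t*c)) * c) t := by
      have := (h1.neg).exp
      have h' : HasDerivAt (fun t : ℝ => 1 - Real.exp (-(t*c)))
          (-(Real.exp (-(t*c)) * (-c))) t := (this.const_sub 1)
      convert h' using 1
      ring
    have hdpow : HasDerivAt (fun t : ℝ => (t*c)^2) (2*(t*c)*c) t := by
      have := h1.pow 2
      exact this.congr_deriv (by ring)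
    have hD := hn.div hdpow (ne_of_gt (pow_pos htc 2))
    rw [(show HasDerivAt (fun t : ℝ => (1 - Real.exp (-(t*c))) / (t*c)^2) _ t from hD).deriv]
    apply div_neg_of_neg_of_pos _ (by positivity)
    set q := Real.exp (-(t*c)) with hq
    have hqpos : 0 < q := Real.exp_pos _
    have hqe : q * Real.exp (t*c) = 1 := by
      rw [hq, ← Real.exp_add]; simp
    have hE : t*c + 1 < Real.exp (t*c) := Real.add_one_lt_exp (ne_of_gt htc)
    have hq1 : q * (1 + t*c) < 1 := by nlinarith
    have hq2 : q < 1 := by nlinarith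
    have hkey : q * (t*c + 2) < 2 := by nlinarith
    have heq : q * c * (t*c)^2 - (1 - q) * (2*(t*c)*c)
        = (c*(t*c)) * (q*(t*c + 2) - 2) := by ring
    rw [heq]
    exact mul_neg_of_pos_of_neg (by positivity) (by linarith)

set_option maxHeartbeats 1000000 in
/-- The left-hand side of equation (25), with ξ the positive root of the quadratic,
    is strictly increasing in R_s on (0,∞); hence the equation has at most one root. -/
theorem lhs_strictMono_unique_root (k₂ ρ : ℝ) (hk : 0 < k₂) (hρ : 0 < ρ) :
    let A := fun Rs : ℝ => k₂ * ((2:ℝ) ^ Rs - 1) / (1 + k₂ * 2 ^ Rs)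
    let B := fun Rs : ℝ => ρ * k₂ * (1 - (2:ℝ) ^ (-Rs)) / (1 + k₂ * 2 ^ Rs)
    let ξ := fun Rs : ℝ => (1 / 2) * (-(A Rs) + Real.sqrt ((A Rs) ^ 2 + 4 * B Rs))
    let g := fun Rs : ℝ =>
      k₂ * ((2:ℝ) ^ Rs + ((2:ℝ) ^ Rs - 1) / ξ Rs) *
        (Rs * Real.log 2 - 1 + Rs * Real.log 2 / ξ Rs)
    StrictMonoOn g (Set.Ioi 0) ∧
      ∀ R₁ ∈ Set.Ioi (0:ℝ), ∀ R₂ ∈ Set.Ioi (0:ℝ), g R₁ = 1 → g R₂ = 1 → R₁ = R₂ := by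
  intro A B ξ g
  have hAval : ∀ t : ℝ, A t = k₂ * ((2:ℝ) ^ t - 1) / (1 + k₂ * 2 ^ t) := fun _ => rfl
  have hBval : ∀ t : ℝ, B t = ρ * k₂ * (1 - (2:ℝ) ^ (-t)) / (1 + k₂ * 2 ^ t) := fun _ => rfl
  have hξval : ∀ t : ℝ, ξ t = (1 / 2) * (-(A t) + Real.sqrt ((A t) ^ 2 + 4 * B t)) :=
    fun _ => rfl
  have hgval : ∀ t : ℝ, g t = k₂ * ((2:ℝ) ^ t + ((2:ℝ) ^ t - 1) / ξ t) *
      (t * Real.log 2 - 1 + t * Real.log 2 / ξ t) := fun _ => rfl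
  clear_value g ξ B A
  set c : ℝ := Real.log 2 with hcdef
  have hc : 0 < c := Real.log_pos one_lt_two
  have h2exp : ∀ t : ℝ, (2:ℝ) ^ t = Real.exp (t * c) := by
    intro t
    rw [hcdef, Real.rpow_def_of_pos two_pos t]
    exact congrArg Real.exp (mul_comm _ _)
  have h2expneg : ∀ t : ℝ, (2:ℝ) ^ (-t) = Real.exp (-(t * c)) := by
    intro t
    rw [h2exp, neg_mul]
  have hE1 : ∀ t : ℝ, 0 < t → 1 < Real.exp (t*c) := by
    intro t ht
    have : Real.exp 0 < Real.exp (t*c) := Real.exp_lt_exp.mpr (by positivity)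
    simpa using this
  have hEneg : ∀ t : ℝ, 0 < t → Real.exp (-(t*c)) < 1 := by
    intro t ht
    have : Real.exp (-(t*c)) < Real.exp 0 :=
      Real.exp_lt_exp.mpr (by nlinarith [mul_pos ht hc])
    simpa using this
  have hqe : ∀ t : ℝ, Real.exp (-(t*c)) * Real.exp (t*c) = 1 := by
    intro t
    rw [← Real.exp_add]
    simp
  have hAeq : ∀ t : ℝ, A t = k₂ * (Real.exp (t*c) - 1) / (1 + k₂ * Real.exp (t*c)) := by
    intro t
    rw [hAval, h2exp]
  have hBeq : ∀ t : ℝ, B t = ρ * k₂ * (1 - Real.exp (-(t*c))) / (1 + k₂ * Real.exp (t*c)) := by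
    intro t
    rw [hBval, h2expneg, h2exp]
  have hden : ∀ t : ℝ, 0 < 1 + k₂ * Real.exp (t*c) := by
    intro t
    have := Real.exp_pos (t*c)
    positivity
  have hApos : ∀ t : ℝ, 0 < t → 0 < A t := by
    intro t ht
    rw [hAeq]
    exact div_pos (mul_pos hk (by linarith [hE1 t ht])) (hden t)
  have hBpos : ∀ t : ℝ, 0 < t → 0 < B t := by
    intro t ht
    rw [hBeq]
    exact div_pos (mul_pos (mul_pos hρ hk) (by linarith [hEneg t ht])) (hden t)
  have hξpos : ∀ t : ℝ, 0 < t → 0 < ξ t := by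
    intro t ht
    rw [hξval]
    exact quad_pos (le_of_lt (hApos t ht)) (hBpos t ht)
  have hξroot : ∀ t : ℝ, 0 < t → (ξ t)^2 + A t * ξ t = B t := by
    intro t ht
    have h0 : (0:ℝ) ≤ (A t)^2 + 4*(B t) := by nlinarith [hApos t ht, hBpos t ht]
    rw [hξval]
    exact quad_root h0
  have hBA : ∀ t : ℝ, 0 < t → B t * Real.exp (t*c) = A t * ρ := by
    intro t ht
    rw [hAeq, hBeq]
    have h2 := (hden t).ne'
    field_simp
    linear_combination -hqe t
  have hgid : ∀ t : ℝ, 0 < t → g t =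
      k₂ * ( Real.exp (t*c) * (t*c - 1)
        + (t*c / ξ t) * (2*Real.exp (t*c) - 1 - (Real.exp (t*c) - 1)/(t*c))
        + ((Real.exp (t*c) - 1)/(t*c)) * (t*c / ξ t)^2 ) := by
    intro t ht
    have hξ := (hξpos t ht).ne'
    have htc : (t*c) ≠ 0 := (mul_pos ht hc).ne'
    rw [hgval, h2exp]
    field_simp
    ring
  have hmono : StrictMonoOn g (Set.Ioi 0) := by
    intro t₁ ht₁ t₂ ht₂ h12
    simp only [Set.mem_Ioi] at ht₁ ht₂
    have htc₁ : 0 < t₁*c := mul_pos ht₁ hc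
    have htc₂ : 0 < t₂*c := mul_pos ht₂ hc
    have hLlt : t₁*c < t₂*c := by nlinarith
    have hE₁ : 1 < Real.exp (t₁*c) := hE1 t₁ ht₁
    have hE₂ : 1 < Real.exp (t₂*c) := hE1 t₂ ht₂
    have hEE : Real.exp (t₁*c) < Real.exp (t₂*c) := Real.exp_lt_exp.mpr hLlt
    have hξ₁ := hξpos t₁ ht₁
    have hξ₂ := hξpos t₂ ht₂
    set η₁ := ξ t₁ / (t₁*c) with hη₁def
    set η₂ := ξ t₂ / (t₂*c) with hη₂def
    set a₁ := A t₁ / (t₁*c) with ha₁def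
    set a₂ := A t₂ / (t₂*c) with ha₂def
    set b₁ := B t₁ / (t₁*c)^2 with hb₁def
    set b₂ := B t₂ / (t₂*c)^2 with hb₂def
    clear_value η₁ η₂ a₁ a₂ b₁ b₂
    have hη₁pos : 0 < η₁ := by rw [hη₁def]; exact div_pos hξ₁ htc₁
    have hη₂pos : 0 < η₂ := by rw [hη₂def]; exact div_pos hξ₂ htc₂
    have ha₁pos : 0 < a₁ := by rw [ha₁def]; exact div_pos (hApos t₁ ht₁) htc₁
    have ha₂pos : 0 < a₂ := by rw [ha₂def]; exact div_pos (hApos t₂ ht₂) htc₂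
    have hq₁ : η₁^2 + a₁*η₁ = b₁ := by
      rw [hη₁def, ha₁def, hb₁def]
      have hne := htc₁.ne'
      field_simp
      linear_combination hξroot t₁ ht₁
    have hq₂ : η₂^2 + a₂*η₂ = b₂ := by
      rw [hη₂def, ha₂def, hb₂def]
      have hne := htc₂.ne'
      field_simp
      linear_combination hξroot t₂ ht₂
    have hbformula : ∀ t : ℝ, 0 < t → B t / (t*c)^2
        = ρ * k₂ * ((1 - Real.exp (-(t*c)))/(t*c)^2) * (1 + k₂*Real.exp (t*c))⁻¹ := by
      intro t ht
      rw [hBeq]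
      simp only [div_eq_mul_inv]
      ring
    have hh1pos : ∀ t : ℝ, 0 < t → 0 < (1 - Real.exp (-(t*c)))/(t*c)^2 := by
      intro t ht
      exact div_pos (by linarith [hEneg t ht]) (pow_pos (mul_pos ht hc) 2)
    have hb12 : b₂ ≤ b₁ := by
      rw [hb₁def, hb₂def, hbformula t₁ ht₁, hbformula t₂ ht₂]
      have hh1 := h1_anti hc ht₁ ht₂ h12
      simp only at hh1
      have hinv : (1 + k₂*Real.exp (t₂*c))⁻¹ ≤ (1 + k₂*Real.exp (t₁*c))⁻¹ := by
        apply inv_anti₀ (hden t₁)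
        nlinarith
      apply mul_le_mul _ hinv (le_of_lt (inv_pos.mpr (hden t₂))) _
      · exact mul_le_mul_of_nonneg_left (le_of_lt hh1) (by positivity)
      · exact mul_nonneg (by positivity) (le_of_lt (hh1pos t₁ ht₁))
    set r₁ := ρ / (Real.exp (t₁*c) * (t₁*c)) with hr₁def
    set r₂ := ρ / (Real.exp (t₂*c) * (t₂*c)) with hr₂def
    clear_value r₁ r₂
    have hr₁pos : 0 < r₁ := by rw [hr₁def]; exact div_pos hρ (mul_pos (Real.exp_pos _) htc₁)
    have hr₂pos : 0 < r₂ := by rw [hr₂def]; exact div_pos hρ (mul_pos (Real.exp_pos _) htc₂)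
    have hr12 : r₂ ≤ r₁ := by
      rw [hr₁def, hr₂def]
      apply div_le_div_of_nonneg_left (le_of_lt hρ) (mul_pos (Real.exp_pos _) htc₁)
      exact mul_le_mul hEE.le hLlt.le htc₁.le (Real.exp_pos _).le
    have hbr₁ : b₁ = a₁ * r₁ := by
      rw [hb₁def, ha₁def, hr₁def]
      have h := hBA t₁ ht₁
      have hE := (Real.exp_pos (t₁*c)).ne'
      have hne := htc₁.ne'
      field_simp
      linear_combination h
    have hbr₂ : b₂ = a₂ * r₂ := by
      rw [hb₂def, ha₂def, hr₂def]
      have h := hBA t₂ ht₂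
      have hE := (Real.exp_pos (t₂*c)).ne'
      have hne := htc₂.ne'
      field_simp
      linear_combination h
    have hqkey : b₂ ≤ η₁^2 + a₂*η₁ := by
      rcases le_or_gt a₁ a₂ with hcase | hcase
      · have p0 : a₁*η₁ ≤ a₂*η₁ := mul_le_mul_of_nonneg_right hcase (le_of_lt hη₁pos)
        linarith
      · have hη₁r : η₁ ≤ r₁ := by
          have h1 : a₁ * η₁ ≤ b₁ := by nlinarith [sq_nonneg η₁]
          rw [hbr₁] at h1
          exact le_of_mul_le_mul_left h1 ha₁pos
        have p1 : (a₁-a₂)*η₁ ≤ (a₁-a₂)*r₁ :=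
          mul_le_mul_of_nonneg_left hη₁r (by linarith)
        have p2 : a₂*r₂ ≤ a₂*r₁ := mul_le_mul_of_nonneg_left hr12 (le_of_lt ha₂pos)
        nlinarith [p1, p2]
    have hηle : η₂ ≤ η₁ := by
      by_contra h
      push_neg at h
      nlinarith [mul_pos (sub_pos.mpr h) (add_pos hη₁pos hη₂pos),
        mul_lt_mul_of_pos_left h ha₂pos]
    have hu12 : t₁*c / ξ t₁ ≤ t₂*c / ξ t₂ := by
      have h1 : t₁*c / ξ t₁ = η₁⁻¹ := by rw [hη₁def, ← inv_div]
      have h2 : t₂*c / ξ t₂ = η₂⁻¹ := by rw [hη₂def, ← inv_div]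
      rw [h1, h2]
      exact inv_anti₀ hη₂pos hηle
    have hu₁pos : 0 < t₁*c / ξ t₁ := div_pos htc₁ hξ₁
    have hu₂pos : 0 < t₂*c / ξ t₂ := div_pos htc₂ hξ₂
    have hv12 : (Real.exp (t₁*c) - 1)/(t₁*c) ≤ (Real.exp (t₂*c) - 1)/(t₂*c) :=
      le_of_lt (v_mono hc ht₁ ht₂ h12)
    have hv₂pos : 0 < (Real.exp (t₂*c) - 1)/(t₂*c) := div_pos (by linarith) htc₂
    have hw12 : 2*Real.exp (t₁*c) - 1 - (Real.exp (t₁*c) - 1)/(t₁*c)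
        ≤ 2*Real.exp (t₂*c) - 1 - (Real.exp (t₂*c) - 1)/(t₂*c) :=
      le_of_lt (w_mono hc ht₁ ht₂ h12)
    have hw₁nonneg : 0 ≤ 2*Real.exp (t₁*c) - 1 - (Real.exp (t₁*c) - 1)/(t₁*c) := by
      have h3 : (Real.exp (t₁*c) - 1)/(t₁*c) ≤ Real.exp (t₁*c) := by
        rw [div_le_iff₀ htc₁]
        have h := Real.add_one_le_exp (-(t₁*c))
        nlinarith [Real.exp_pos (-(t₁*c)), hqe t₁]
      linarith
    have hS1 : Real.exp (t₁*c) * (t₁*c - 1) < Real.exp (t₂*c) * (t₂*c - 1) :=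
      S1_mono hc (le_of_lt ht₁) (le_of_lt ht₂) h12
    rw [hgid t₁ ht₁, hgid t₂ ht₂]
    apply mul_lt_mul_of_pos_left _ hk
    have hterm2 : (t₁*c / ξ t₁) * (2*Real.exp (t₁*c) - 1 - (Real.exp (t₁*c) - 1)/(t₁*c))
        ≤ (t₂*c / ξ t₂) * (2*Real.exp (t₂*c) - 1 - (Real.exp (t₂*c) - 1)/(t₂*c)) :=
      mul_le_mul hu12 hw12 hw₁nonneg (le_of_lt hu₂pos)
    have hterm3 : ((Real.exp (t₁*c) - 1)/(t₁*c)) * (t₁*c / ξ t₁)^2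
        ≤ ((Real.exp (t₂*c) - 1)/(t₂*c)) * (t₂*c / ξ t₂)^2 := by
      apply mul_le_mul hv12 _ (sq_nonneg _) (le_of_lt hv₂pos)
      exact pow_le_pow_left₀ (le_of_lt hu₁pos) hu12 2
    linarith
  refine ⟨hmono, ?_⟩
  intro R₁ h₁ R₂ h₂ e₁ e₂
  exact hmono.injOn h₁ h₂ (e₁.trans e₂.symm)
end
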